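/- arXiv:1411.2935 — 3 statements merged into one kernel-verified Lean document; each statement's English description precedes it below -/
import Mathlib

section
/- Let r ≥ 1 be odd and let l_1,…,l_r, θ_1,…,θ_r, L be real numbers. Then the trace of A(l_1,θ_1)·A(l_2,θ_2)⋯A(l_r,θ_r)·γ_L equals the sum over all subsets I ⊆ {1,…,r} of even cardinality of (−1)^{s(I)} · 2 · sin θ_I · cos θ_{Î} · sinh(L/2 − L_I). -/
open Finset

/-- The matrix `A(l,θ) = [[cos θ, −e^l sin θ], [−e^{−l} sin θ, −cos θ]]`. -/
noncomputable def Amat (l θ : ℝ) : Matrix (Fin 2) (Fin 2) ℝ :=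
  !![Real.cos θ, -Real.exp l * Real.sin θ; -Real.exp (-l) * Real.sin θ, -Real.cos θ]

/-- The matrix `γ_L = diag(e^{L/2}, e^{−L/2})`. -/
noncomputable def gammaMat (L : ℝ) : Matrix (Fin 2) (Fin 2) ℝ :=
  !![Real.exp (L / 2), 0; 0, Real.exp (-(L / 2))]

/-- The matrix `S(z) = diag(e^{z/2}, e^{−z/2})`. -/
noncomputable def Smat (z : ℝ) : Matrix (Fin 2) (Fin 2) ℝ :=
  !![Real.exp (z / 2), 0; 0, Real.exp (-(z / 2))]

/-- The matrix `D = diag(1, −1)`. -/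
def Dmat : Matrix (Fin 2) (Fin 2) ℝ := !![1, 0; 0, -1]

/-- Alternating length `L_I = Σ_{j=1}^k (−1)^j l_{i_j}` for `I = {i_1 < ⋯ < i_k}`. -/
def altLen {r : ℕ} (l : Fin r → ℝ) (I : Finset (Fin r)) : ℝ :=
  let s := (I.sort (· ≤ ·)).map l
  ∑ j ∈ Finset.range s.length, (-1 : ℝ) ^ (j + 1) * s.getD j 0

/-- Signature `s(I) = (i_2−i_1+1) + (i_4−i_3+1) + ⋯ + (i_k−i_{k−1}+1)` for `I` of even
cardinality, with `s(∅) = 0`. -/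
def sig {r : ℕ} (I : Finset (Fin r)) : ℕ :=
  let s := (I.sort (· ≤ ·)).map Fin.val
  ∑ m ∈ Finset.range (s.length / 2), (s.getD (2 * m + 1) 0 - s.getD (2 * m) 0 + 1)

/-- `P(k,n)`: the set of `n`-tuples of nonnegative integers summing to `k`. -/
def Pkn (k n : ℕ) : Finset (Fin n → ℕ) := Finset.Nat.antidiagonalTuple n k

/-- `B_{n,k,r}`: sum of multinomial coefficients `(k choose q)` over `q ∈ P(k,n)` whose
first `r` entries are odd and remaining entries are even. -/
def Bnkr (n k r : ℕ) : ℕ :=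
  ∑ q ∈ (Pkn k n).filter
      (fun q => ∀ i : Fin n, ((i : ℕ) < r → Odd (q i)) ∧ (r ≤ (i : ℕ) → Even (q i))),
    Nat.multinomial Finset.univ q

def Jmat : Matrix (Fin 2) (Fin 2) ℝ := !![0, 1; 1, 0]

noncomputable def Wmat (z : ℝ) (a b : ℕ) : Matrix (Fin 2) (Fin 2) ℝ :=
  Smat z * Dmat ^ a * Jmat ^ b

lemma Smat_mul_Smat (z w : ℝ) : Smat z * Smat w = Smat (z + w) := by
  simp only [Smat, Matrix.mul_fin_two, ← Real.exp_add]
  norm_num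
  ring_nf
  exact ⟨trivial, trivial⟩

lemma Smat_zero : Smat 0 = 1 := by
  simp [Smat, Matrix.one_fin_two]

lemma Dmat_mul_Smat (z : ℝ) : Dmat * Smat z = Smat z * Dmat := by
  simp [Dmat, Smat, Matrix.mul_fin_two]

lemma Jmat_mul_Smat (z : ℝ) : Jmat * Smat z = Smat (-z) * Jmat := by
  simp [Jmat, Smat, Matrix.mul_fin_two, neg_div]

lemma Dmat_sq : Dmat * Dmat = 1 := by
  simp [Dmat, Matrix.mul_fin_two, Matrix.one_fin_two]

lemma Jmat_sq : Jmat * Jmat = 1 := by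
  simp [Jmat, Matrix.mul_fin_two, Matrix.one_fin_two]

lemma Dmat_pow (a : ℕ) : Dmat ^ a = if a % 2 = 0 then 1 else Dmat := by
  induction a with
  | zero => simp
  | succ n ih =>
    rw [pow_succ, ih]
    rcases Nat.even_or_odd n with h | h
    · have h1 : n % 2 = 0 := Nat.even_iff.mp h
      have h2 : (n+1) % 2 = 1 := by omega
      simp [h1, h2]
    · have h1 : n % 2 = 1 := Nat.odd_iff.mp h
      have h2 : (n+1) % 2 = 0 := by omega
      simp [h1, h2, Dmat_sq]

lemma Jmat_pow (b : ℕ) : Jmat ^ b = if b % 2 = 0 then 1 else Jmat := by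
  induction b with
  | zero => simp
  | succ n ih =>
    rw [pow_succ, ih]
    rcases Nat.even_or_odd n with h | h
    · have h1 : n % 2 = 0 := Nat.even_iff.mp h
      have h2 : (n+1) % 2 = 1 := by omega
      simp [h1, h2]
    · have h1 : n % 2 = 1 := Nat.odd_iff.mp h
      have h2 : (n+1) % 2 = 0 := by omega
      simp [h1, h2, Jmat_sq]

lemma Jmat_mul_Dmat : Jmat * Dmat = (-1 : ℝ) • (Dmat * Jmat) := by
  simp [Jmat, Dmat, Matrix.mul_fin_two, Matrix.smul_of, Matrix.smul_cons]

lemma Jmat_mul_Dpow (a : ℕ) : Jmat * Dmat ^ a = ((-1 : ℝ) ^ a) • (Dmat ^ a * Jmat) := by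
  rw [Dmat_pow]
  rcases Nat.even_or_odd a with h | h
  · have h1 : a % 2 = 0 := Nat.even_iff.mp h
    simp [h1, h.neg_one_pow]
  · have h1 : a % 2 = 1 := Nat.odd_iff.mp h
    simp [h1, h.neg_one_pow, Jmat_mul_Dmat]

lemma Dmat_mul_Wmat (z : ℝ) (a b : ℕ) : Dmat * Wmat z a b = Wmat z (a + 1) b := by
  unfold Wmat
  rw [← Matrix.mul_assoc, ← Matrix.mul_assoc, Dmat_mul_Smat, Matrix.mul_assoc (Smat z),
    ← pow_succ']

lemma SJ_mul_Wmat (lz z : ℝ) (a b : ℕ) :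
    (Smat lz * Jmat) * Wmat z a b = ((-1 : ℝ) ^ a) • Wmat (lz - z) a (b + 1) := by
  unfold Wmat
  rw [Matrix.mul_assoc (Smat lz), ← Matrix.mul_assoc Jmat, ← Matrix.mul_assoc Jmat,
    Jmat_mul_Smat, Matrix.mul_assoc (Smat (-z)), Jmat_mul_Dpow, Matrix.mul_smul,
    Matrix.smul_mul, Matrix.mul_smul]
  congr 1
  rw [← Matrix.mul_assoc, ← Matrix.mul_assoc, Smat_mul_Smat, pow_succ]
  have hz : lz + -z = lz - z := by ring
  rw [hz]
  rw [show Jmat ^ b * Jmat = Jmat * Jmat ^ b from (Commute.self_pow Jmat b).symm.eq]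
  simp only [Matrix.mul_assoc]

lemma Amat_decomp (l θ : ℝ) :
    Amat l θ = Real.cos θ • Dmat + (-Real.sin θ) • (Smat (2 * l) * Jmat) := by
  have h1 : (2 * l) / 2 = l := by ring
  have h2 : -((2 * l) / 2) = -l := by ring
  ext i j
  fin_cases i <;> fin_cases j <;>
    simp [Amat, Smat, Dmat, Jmat, Matrix.mul_fin_two, h1, h2] <;> ring

/-- list-level alternating sum -/
def altL (s : List ℝ) : ℝ := ∑ j ∈ Finset.range s.length, (-1 : ℝ) ^ (j + 1) * s.getD j 0

lemma altLen_eq {r : ℕ} (l : Fin r → ℝ) (I : Finset (Fin r)) :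
    altLen l I = altL ((I.sort (· ≤ ·)).map l) := rfl

lemma altL_nil : altL [] = 0 := by simp [altL]

lemma altL_cons (x : ℝ) (t : List ℝ) : altL (x :: t) = -x - altL t := by
  unfold altL
  rw [show (x :: t).length = t.length + 1 from rfl, Finset.sum_range_succ']
  simp only [List.getD_cons_succ, List.getD_cons_zero, pow_one]
  have : ∀ j ∈ Finset.range t.length,
      (-1 : ℝ) ^ (j + 1 + 1) * t.getD j 0 = -((-1 : ℝ) ^ (j + 1) * t.getD j 0) := by
    intro j _; ring
  rw [Finset.sum_congr rfl this, Finset.sum_neg_distrib]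
  ring

/-- sorted map lemma -/
lemma sort_map_succ {r : ℕ} (I : Finset (Fin r)) :
    ((I.map (Fin.succEmb r)).sort (· ≤ ·)) = (I.sort (· ≤ ·)).map (Fin.succ) := by
  refine (fun hp h1 h2 => List.Perm.eq_of_pairwise' (r := (· ≤ ·)) h1 h2 hp) ?_ ?_ ?_
  · rw [← Multiset.coe_eq_coe]
    have h1 : (((I.map (Fin.succEmb r)).sort (· ≤ ·)) : Multiset (Fin (r+1))) =
        (I.map (Fin.succEmb r)).val := Finset.sort_eq _ _
    have h2 : ((I.sort (· ≤ ·) : List (Fin r)) : Multiset (Fin r)) = I.val := Finset.sort_eq _ _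
    rw [h1]
    show (I.map (Fin.succEmb r)).val = ((I.sort (· ≤ ·)).map Fin.succ : List (Fin (r+1)))
    rw [Finset.map_val, ← Multiset.map_coe, h2]
    rfl
  · exact Finset.pairwise_sort _ _
  · exact List.Pairwise.map _ (fun a b (h : a ≤ b) => Fin.succ_le_succ_iff.mpr h)
      (Finset.pairwise_sort I _)

lemma zero_not_mem_map_succ {r : ℕ} (I : Finset (Fin r)) :
    (0 : Fin (r+1)) ∉ I.map (Fin.succEmb r) := by
  simp only [Finset.mem_map, not_exists]
  intro j
  rintro ⟨-, h⟩
  exact Fin.succ_ne_zero j h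

lemma sort_insert_zero {r : ℕ} (I : Finset (Fin r)) :
    ((insert (0 : Fin (r+1)) (I.map (Fin.succEmb r))).sort (· ≤ ·)) =
      0 :: ((I.map (Fin.succEmb r)).sort (· ≤ ·)) :=
  Finset.sort_insert _ (fun b _ => Fin.zero_le b) (zero_not_mem_map_succ I)

lemma altLen_map_succ {r : ℕ} (l : Fin (r+1) → ℝ) (I : Finset (Fin r)) :
    altLen l (I.map (Fin.succEmb r)) = altLen (l ∘ Fin.succ) I := by
  rw [altLen_eq, altLen_eq, sort_map_succ, List.map_map]

lemma altLen_insert_zero {r : ℕ} (l : Fin (r+1) → ℝ) (I : Finset (Fin r)) :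
    altLen l (insert 0 (I.map (Fin.succEmb r))) = -(l 0) - altLen (l ∘ Fin.succ) I := by
  rw [altLen_eq, sort_insert_zero, List.map_cons, altL_cons, ← altLen_eq, altLen_map_succ]

lemma altLen_empty {r : ℕ} (l : Fin r → ℝ) : altLen l (∅ : Finset (Fin r)) = 0 := by
  rw [altLen_eq, Finset.sort_empty]
  simp [altL]

/-- list-level signature -/
def sigL (s : List ℕ) : ℕ :=
  ∑ m ∈ Finset.range (s.length / 2), (s.getD (2 * m + 1) 0 - s.getD (2 * m) 0 + 1)

lemma sig_eq {r : ℕ} (I : Finset (Fin r)) : sig I = sigL ((I.sort (· ≤ ·)).map Fin.val) := rfl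

lemma sigL_cons_cons (a b : ℕ) (t : List ℕ) :
    sigL (a :: b :: t) = (b - a + 1) + sigL t := by
  unfold sigL
  have hl : (a :: b :: t).length / 2 = t.length / 2 + 1 := by
    simp only [List.length_cons]; omega
  rw [hl, Finset.sum_range_succ']
  have h2 : ∀ m : ℕ, 2 * (m + 1) + 1 = (2 * m + 1) + 1 + 1 := fun m => by ring
  have h3 : ∀ m : ℕ, 2 * (m + 1) = (2 * m) + 1 + 1 := fun m => by ring
  simp only [h2, h3, List.getD_cons_succ, List.getD_cons_zero, Nat.mul_zero, Nat.zero_add]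
  omega

lemma sigL_parity : ∀ (n : ℕ) (s : List ℕ), s.length = 2 * n → s.Pairwise (· ≤ ·) →
    sigL s % 2 = (s.sum + n) % 2 := by
  intro n
  induction n with
  | zero =>
    intro s hs _
    rw [List.length_eq_zero_iff.mp hs]
    simp [sigL]
  | succ n ih =>
    intro s hs hsort
    match s with
    | a :: b :: t =>
      have hab : a ≤ b := List.rel_of_pairwise_cons hsort (by simp)
      have ht : t.Pairwise (· ≤ ·) := (List.pairwise_cons.mp (List.pairwise_cons.mp hsort).2).2
      have hlen : t.length = 2 * n := by
        simp only [List.length_cons] at hs; omega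
      have := ih t hlen ht
      rw [sigL_cons_cons]
      simp only [List.sum_cons]
      omega
    | [] => simp at hs
    | [a] => simp at hs; omega

lemma sorted_map_val {r : ℕ} (I : Finset (Fin r)) :
    ((I.sort (· ≤ ·)).map Fin.val).Pairwise (· ≤ ·) :=
  List.Pairwise.map Fin.val (fun _ _ (h : _ ≤ _) => h) (Finset.pairwise_sort I (· ≤ ·))

lemma sum_map_val {r : ℕ} (I : Finset (Fin r)) :
    ((I.sort (· ≤ ·)).map Fin.val).sum = ∑ i ∈ I, (i : ℕ) := by
  rw [← Finset.sum_map_toList]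
  exact ((Finset.sort_perm_toList I (· ≤ ·)).map Fin.val).sum_eq

lemma length_sort_map_val {r : ℕ} (I : Finset (Fin r)) :
    ((I.sort (· ≤ ·)).map Fin.val).length = I.card := by
  rw [List.length_map, Finset.length_sort]

/-- Gauss sum shorthand -/
def eG (k : ℕ) : ℕ := ∑ j ∈ Finset.range k, j

lemma eG_succ (k : ℕ) : eG (k + 1) = eG k + k := Finset.sum_range_succ _ _

lemma eG_parity (n : ℕ) : eG (2 * n) % 2 = n % 2 := by
  induction n with
  | zero => simp [eG]
  | succ n ih =>
    have h : 2 * (n + 1) = (2 * n + 1) + 1 := by ring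
    rw [h, eG_succ, eG_succ]
    omega

lemma negpow_eq {m n : ℕ} (h : m % 2 = n % 2) : (-1 : ℝ) ^ m = (-1 : ℝ) ^ n := by
  rw [neg_one_pow_eq_pow_mod_two, h, ← neg_one_pow_eq_pow_mod_two]

lemma sig_parity {r : ℕ} (I : Finset (Fin r)) (h : Even I.card) :
    (-1 : ℝ) ^ (sig I) = (-1 : ℝ) ^ (r * I.card + (∑ i ∈ I, (i : ℕ)) + eG I.card) := by
  obtain ⟨n, hn⟩ := h
  have hcard : I.card = 2 * n := by omega
  apply negpow_eq
  have h1 : sig I % 2 = ((∑ i ∈ I, (i : ℕ)) + n) % 2 := by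
    rw [sig_eq, sigL_parity n _ (by rw [length_sort_map_val, hcard]) (sorted_map_val I),
      sum_map_val]
  have h2 : eG I.card % 2 = n % 2 := by rw [hcard]; exact eG_parity n
  have h3 : (r * I.card) % 2 = 0 := by
    rw [hcard, ← Nat.mul_assoc, Nat.mul_comm r 2, Nat.mul_assoc]
    omega
  generalize (∑ i ∈ I, (i : ℕ)) = A at *
  generalize sig I = B at *
  generalize eG I.card = C at *
  generalize r * I.card = E at *
  omega

lemma sum_powerset_map {α β M : Type*} [AddCommMonoid M] (e : α ↪ β) (s : Finset α)
    (f : Finset β → M) :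
    ∑ I ∈ (s.map e).powerset, f I = ∑ I ∈ s.powerset, f (I.map e) := by
  refine (Finset.sum_bij (fun I _ => I.map e) ?_ ?_ ?_ ?_).symm
  · intro I hI
    exact Finset.mem_powerset.mpr (Finset.map_subset_map.mpr (Finset.mem_powerset.mp hI))
  · intro I _ J _ h
    exact Finset.map_injective e h
  · intro J hJ
    obtain ⟨I, hI, rfl⟩ := Finset.subset_map_iff.mp (Finset.mem_powerset.mp hJ)
    exact ⟨I, Finset.mem_powerset.mpr hI, rfl⟩
  · intro I _
    rfl

lemma mem_map_succ {r : ℕ} (I : Finset (Fin r)) (j : Fin r) :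
    j.succ ∈ I.map (Fin.succEmb r) ↔ j ∈ I := by
  simp only [Finset.mem_map, Fin.coe_succEmb]
  constructor
  · rintro ⟨a, ha, hae⟩
    rwa [← Fin.succ_injective _ hae]
  · exact fun h => ⟨j, h, rfl⟩

lemma univ_fin_succ {r : ℕ} :
    (Finset.univ : Finset (Fin (r+1))) = insert 0 (Finset.univ.map (Fin.succEmb r)) := by
  ext x
  cases x using Fin.cases with
  | zero => simp
  | succ j =>
    simp only [Finset.mem_univ, Finset.mem_insert, mem_map_succ, true_iff]
    exact Or.inr trivial

lemma sum_finset_fin_succ {M : Type*} [AddCommMonoid M] {r : ℕ} (f : Finset (Fin (r+1)) → M) :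
    ∑ I : Finset (Fin (r+1)), f I =
      ∑ I : Finset (Fin r),
        (f (I.map (Fin.succEmb r)) + f (insert 0 (I.map (Fin.succEmb r)))) := by
  rw [← Finset.powerset_univ, univ_fin_succ,
    Finset.sum_powerset_insert (zero_not_mem_map_succ Finset.univ),
    sum_powerset_map, sum_powerset_map, Finset.powerset_univ, ← Finset.sum_add_distrib]

lemma compl_map_succ {r : ℕ} (I : Finset (Fin r)) :
    (I.map (Fin.succEmb r))ᶜ = insert 0 ((Iᶜ).map (Fin.succEmb r)) := by
  ext x
  cases x using Fin.cases with
  | zero =>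
    simp only [Finset.mem_compl, Finset.mem_insert]
    exact iff_of_true (zero_not_mem_map_succ I) (Or.inl trivial)
  | succ j =>
    rw [Finset.mem_compl, mem_map_succ, Finset.mem_insert, mem_map_succ, Finset.mem_compl]
    constructor
    · exact fun h => Or.inr h
    · rintro (h | h)
      · exact absurd h (Fin.succ_ne_zero j)
      · exact h

lemma compl_insert_zero {r : ℕ} (I : Finset (Fin r)) :
    (insert (0 : Fin (r+1)) (I.map (Fin.succEmb r)))ᶜ = (Iᶜ).map (Fin.succEmb r) := by
  rw [Finset.compl_insert, compl_map_succ, Finset.erase_insert (zero_not_mem_map_succ Iᶜ)]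

lemma sum_val_map_succ {r : ℕ} (I : Finset (Fin r)) :
    ∑ i ∈ I.map (Fin.succEmb r), (i : ℕ) = (∑ i ∈ I, (i : ℕ)) + I.card := by
  rw [Finset.sum_map]
  simp only [Fin.coe_succEmb, Fin.val_succ]
  rw [Finset.sum_add_distrib, Finset.sum_const, smul_eq_mul, mul_one]

noncomputable def coeff (r : ℕ) (θ : Fin r → ℝ) (I : Finset (Fin r)) : ℝ :=
  (-1 : ℝ) ^ (r * I.card + (∑ i ∈ I, (i : ℕ)) + eG I.card) *
    (∏ i ∈ I, Real.sin (θ i)) * (∏ i ∈ Iᶜ, Real.cos (θ i))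

lemma coeff_map_succ (r : ℕ) (θ : Fin (r+1) → ℝ) (I : Finset (Fin r)) :
    coeff (r+1) θ (I.map (Fin.succEmb r)) = Real.cos (θ 0) * coeff r (θ ∘ Fin.succ) I := by
  unfold coeff
  rw [Finset.card_map, sum_val_map_succ, compl_map_succ,
    Finset.prod_insert (zero_not_mem_map_succ Iᶜ), Finset.prod_map, Finset.prod_map]
  have hsign : (-1 : ℝ) ^ ((r+1) * I.card + ((∑ i ∈ I, (i : ℕ)) + I.card) + eG I.card) =
      (-1 : ℝ) ^ (r * I.card + (∑ i ∈ I, (i : ℕ)) + eG I.card) := by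
    apply negpow_eq
    rw [show (r+1) * I.card = r * I.card + I.card from by ring]
    generalize r * I.card = p
    generalize (∑ i ∈ I, (i : ℕ)) = q
    generalize eG I.card = t
    omega
  rw [hsign]
  simp only [Fin.coe_succEmb, Function.comp_apply]
  ring

lemma coeff_insert_zero (r : ℕ) (θ : Fin (r+1) → ℝ) (I : Finset (Fin r)) (hk : I.card ≤ r) :
    coeff (r+1) θ (insert 0 (I.map (Fin.succEmb r))) =
      -Real.sin (θ 0) * ((-1 : ℝ) ^ (r - I.card)) * coeff r (θ ∘ Fin.succ) I := by
  unfold coeff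
  rw [Finset.card_insert_of_notMem (zero_not_mem_map_succ I), Finset.card_map,
    Finset.sum_insert (zero_not_mem_map_succ I), sum_val_map_succ, compl_insert_zero,
    Finset.prod_insert (zero_not_mem_map_succ I), Finset.prod_map, Finset.prod_map]
  have hsign : (-1 : ℝ) ^ ((r+1) * (I.card + 1) +
        (((0 : Fin (r+1)) : ℕ) + ((∑ i ∈ I, (i : ℕ)) + I.card)) + eG (I.card + 1)) =
      (-1 : ℝ) ^ (1 + (r - I.card) + (r * I.card + (∑ i ∈ I, (i : ℕ)) + eG I.card)) := by
    apply negpow_eq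
    rw [eG_succ, show (r+1) * (I.card + 1) = r * I.card + r + I.card + 1 from by ring,
      show ((0 : Fin (r+1)) : ℕ) = 0 from rfl]
    generalize r * I.card = p
    generalize (∑ i ∈ I, (i : ℕ)) = q
    generalize eG I.card = t
    omega
  rw [hsign, pow_add, pow_add, pow_one]
  simp only [Fin.coe_succEmb, Function.comp_apply]
  ring

theorem engine : ∀ (r : ℕ) (l θ : Fin r → ℝ),
    (List.ofFn fun i : Fin r => Amat (l i) (θ i)).prod =
      ∑ I : Finset (Fin r), coeff r θ I • Wmat (-2 * altLen l I) (r - I.card) I.card := by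
  intro r
  induction r with
  | zero =>
    intro l θ
    rw [List.ofFn_zero, List.prod_nil]
    rw [Finset.sum_eq_single (∅ : Finset (Fin 0))]
    · simp [coeff, eG, altLen_empty, Wmat, Smat_zero]
    · intro I _ hI
      exact absurd (Finset.eq_empty_of_isEmpty I) hI
    · intro h
      exact absurd (Finset.mem_univ _) h
  | succ r ih =>
    intro l θ
    rw [List.ofFn_succ, List.prod_cons,
      show (List.ofFn fun i : Fin r => Amat (l i.succ) (θ i.succ)) =
        (List.ofFn fun i : Fin r => Amat ((l ∘ Fin.succ) i) ((θ ∘ Fin.succ) i)) from rfl,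
      ih (l ∘ Fin.succ) (θ ∘ Fin.succ)]
    rw [Finset.mul_sum]
    rw [sum_finset_fin_succ
      (fun I => coeff (r+1) θ I • Wmat (-2 * altLen l I) (r + 1 - I.card) I.card)]
    apply Finset.sum_congr rfl
    intro I _
    have hk : I.card ≤ r := by
      have := Finset.card_le_univ I
      simpa using this
    -- rewrite RHS data
    rw [coeff_map_succ, coeff_insert_zero r θ I hk, Finset.card_map,
      Finset.card_insert_of_notMem (zero_not_mem_map_succ I), Finset.card_map,
      altLen_map_succ, altLen_insert_zero,
      show r + 1 - I.card = (r - I.card) + 1 from by omega,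
      show r + 1 - (I.card + 1) = r - I.card from by omega]
    -- expand LHS
    rw [Amat_decomp (l 0) (θ 0), Matrix.mul_smul, add_mul, Matrix.smul_mul, Matrix.smul_mul,
      Dmat_mul_Wmat, SJ_mul_Wmat]
    rw [show 2 * l 0 - -2 * altLen (l ∘ Fin.succ) I =
      -2 * (-(l 0) - altLen (l ∘ Fin.succ) I) from by ring]
    rw [smul_add, smul_smul, smul_smul, smul_smul]
    congr 1
    · congr 1
      ring
    · congr 1
      ring

lemma trace_WS_of_odd_b (z L : ℝ) (a b : ℕ) (hb : b % 2 = 1) :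
    Matrix.trace (Wmat z a b * Smat L) = 0 := by
  unfold Wmat
  rw [Dmat_pow, Jmat_pow]
  simp only [hb]
  rcases Nat.even_or_odd a with h | h
  · have h1 : a % 2 = 0 := Nat.even_iff.mp h
    simp only [h1, if_true, if_false]
    norm_num
    simp [Smat, Jmat, Matrix.mul_fin_two, Matrix.trace_fin_two_of]
  · have h1 : a % 2 = 1 := Nat.odd_iff.mp h
    simp only [h1, if_neg, if_false]
    norm_num
    simp [Smat, Jmat, Dmat, Matrix.mul_fin_two, Matrix.trace_fin_two_of]

lemma trace_WS_of_even_b_odd_a (z L : ℝ) (a b : ℕ) (hb : b % 2 = 0) (ha : a % 2 = 1) :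
    Matrix.trace (Wmat z a b * Smat L) = 2 * Real.sinh ((z + L) / 2) := by
  unfold Wmat
  rw [Dmat_pow, Jmat_pow]
  simp only [hb, ha]
  norm_num
  rw [Real.sinh_eq]
  simp [Smat, Dmat, Matrix.mul_fin_two, Matrix.trace_fin_two_of, ← Real.exp_add]
  rw [show z / 2 + L / 2 = (z + L) / 2 from by ring,
    show -(z / 2) + -(L / 2) = -((z + L) / 2) from by ring]
  ring


/-- trace formula for odd `r`, in `sinh` form. -/
theorem trace_prod_eq_sum_even_subsets_of_odd (r : ℕ) (hr : Odd r)
    (l θ : Fin r → ℝ) (L : ℝ) :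
    Matrix.trace ((List.ofFn fun i : Fin r => Amat (l i) (θ i)).prod * gammaMat L) =
      ∑ I ∈ Finset.univ.filter (fun I : Finset (Fin r) => Even I.card),
        (-1 : ℝ) ^ sig I * 2 * (∏ i ∈ I, Real.sin (θ i)) * (∏ i ∈ Iᶜ, Real.cos (θ i)) *
          Real.sinh (L / 2 - altLen l I) := by
  rw [engine, show gammaMat L = Smat L from rfl, Finset.sum_mul]
  simp only [Matrix.smul_mul]
  rw [Matrix.trace_sum]
  simp only [Matrix.trace_smul, smul_eq_mul]
  rw [← Finset.sum_filter_add_sum_filter_not Finset.univ (fun I : Finset (Fin r) => Even I.card)]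
  have hzero : ∑ I ∈ Finset.univ.filter (fun I : Finset (Fin r) => ¬ Even I.card),
      coeff r θ I * Matrix.trace (Wmat (-2 * altLen l I) (r - I.card) I.card * Smat L) = 0 := by
    apply Finset.sum_eq_zero
    intro I hI
    have hodd : I.card % 2 = 1 := by
      have h := (Finset.mem_filter.mp hI).2
      rw [Nat.even_iff] at h
      omega
    rw [trace_WS_of_odd_b _ _ _ _ hodd, mul_zero]
  rw [hzero, add_zero]
  apply Finset.sum_congr rfl
  intro I hI
  have heven : Even I.card := (Finset.mem_filter.mp hI).2
  have hb : I.card % 2 = 0 := Nat.even_iff.mp heven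
  have hk : I.card ≤ r := by
    have := Finset.card_le_univ I
    simpa using this
  have ha : (r - I.card) % 2 = 1 := by
    have hr1 : r % 2 = 1 := Nat.odd_iff.mp hr
    omega
  rw [trace_WS_of_even_b_odd_a _ _ _ _ hb ha]
  rw [show (-2 * altLen l I + L) / 2 = L / 2 - altLen l I from by ring]
  unfold coeff
  rw [sig_parity I heven]
  ring
end

section
/- Let n ≥ 1, let f_1,…,f_n be invertible 2×2 real matrices, let γ be any 2×2 real matrix, and define T : ℝ → ℝ by T(z) = Tr( (f_1⁻¹ S(z) f_1)·(f_2⁻¹ S(z) f_2)⋯(f_n⁻¹ S(z) f_n)·γ ). Set A_i = f_i⁻¹ D f_i for 1 ≤ i ≤ n. Then for every k ≥ 0, the k-th derivative of T at 0 equals 2^{−k} · Σ_{r = 0, r ≡ k (mod 2)}^{k} B_{n,k,r} · Σ_{1 ≤ i_1 < i_2 < ⋯ < i_r ≤ n} Tr( A_{i_1} · A_{i_2} ⋯ A_{i_r} · γ ). -/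
open Finset

/- ### Auxiliary material -/

abbrev M2' : Type := Matrix (Fin 2) (Fin 2) ℝ

def eps (r : ℕ) {n : ℕ} (i : Fin n) : ℝ := if (i : ℕ) < r then -1 else 1

lemma card_filter_lt' {n r : ℕ} (hr : r ≤ n) :
    ((univ : Finset (Fin n)).filter fun i : Fin n => (i : ℕ) < r).card = r := by
  have h : (univ : Finset (Fin n)).filter (fun i : Fin n => (i : ℕ) < r)
      = Finset.map (Fin.castLEEmb hr) univ := by
    ext i
    simp only [mem_filter, mem_univ, true_and, mem_map]
    constructor
    · intro h; exact ⟨⟨i, h⟩, by simp [Fin.castLEEmb, Fin.castLE]⟩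
    · rintro ⟨j, -, rfl⟩; exact j.2
  rw [h, card_map, card_univ, Fintype.card_fin]

lemma iteratedDeriv_sum_exp {ι : Type} (s : Finset ι) (C m : ι → ℝ) (k : ℕ) (x : ℝ) :
    iteratedDeriv k (fun z => ∑ i ∈ s, C i * Real.exp (m i * z)) x
      = ∑ i ∈ s, C i * m i ^ k * Real.exp (m i * x) := by
  induction k generalizing x with
  | zero => simp
  | succ k ih =>
    rw [iteratedDeriv_succ]
    have hfe : iteratedDeriv k (fun z => ∑ i ∈ s, C i * Real.exp (m i * z))
        = fun x => ∑ i ∈ s, C i * m i ^ k * Real.exp (m i * x) := funext ih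
    rw [hfe]
    have hd : HasDerivAt (fun x => ∑ i ∈ s, C i * m i ^ k * Real.exp (m i * x))
        (∑ i ∈ s, C i * m i ^ k * (Real.exp (m i * x) * m i)) x := by
      apply HasDerivAt.fun_sum
      intro i _
      simpa using (((hasDerivAt_id x).const_mul (m i)).exp).const_mul (C i * m i ^ k)
    rw [hd.deriv]
    exact Finset.sum_congr rfl fun i _ => by ring

lemma prod_expand {n : ℕ} (A : Fin n → M2') (c s : ℝ) :
    ∀ l : List (Fin n), l.Pairwise (· < ·) →
      (l.map fun i => c • (1 : M2') + s • A i).prod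
        = ∑ I ∈ l.toFinset.powerset,
            (c ^ (l.length - I.card) * s ^ I.card) • ((I.sort (· ≤ ·)).map A).prod := by
  intro l
  induction l with
  | nil => intro _; simp
  | cons i t ih =>
    intro hs
    have hst : t.Pairwise (· < ·) := hs.of_cons
    have hit : ∀ b ∈ t, i < b := fun b hb => List.rel_of_pairwise_cons hs hb
    have hint : i ∉ t.toFinset := by
      simp only [List.mem_toFinset]
      intro h; exact lt_irrefl i (hit i h)
    rw [List.map_cons, List.prod_cons, ih hst]
    rw [List.toFinset_cons, Finset.sum_powerset_insert hint]
    rw [add_mul, Finset.mul_sum, Finset.mul_sum]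
    congr 1
    · apply Finset.sum_congr rfl
      intro I hI
      have hIc : I.card ≤ t.length := le_trans (Finset.card_le_card (Finset.mem_powerset.mp hI))
        t.toFinset_card_le
      rw [Matrix.smul_mul, one_mul, smul_smul, List.length_cons,
        Nat.succ_sub hIc, pow_succ]
      ring_nf
    · apply Finset.sum_congr rfl
      intro I hI
      have hI' := Finset.mem_powerset.mp hI
      have hiI : i ∉ I := fun h => hint (hI' h)
      have hle : ∀ b ∈ I, i ≤ b := fun b hb => le_of_lt (hit b (List.mem_toFinset.mp (hI' hb)))
      rw [Finset.sort_insert (· ≤ ·) hle hiI, List.map_cons, List.prod_cons,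
        Finset.card_insert_of_notMem hiI, Matrix.smul_mul, Matrix.mul_smul, smul_smul,
        List.length_cons, Nat.succ_sub_succ, pow_succ]
      ring_nf

lemma Smat_eq (z : ℝ) :
    Smat z = Real.cosh (z / 2) • (1 : M2') + Real.sinh (z / 2) • Dmat := by
  ext i j
  fin_cases i <;> fin_cases j <;>
    simp [Smat, Dmat, Matrix.one_apply, Real.cosh_eq, Real.sinh_eq] <;> ring

lemma conj_Smat {n : ℕ} (f : Fin n → M2') (hf : ∀ i, IsUnit (f i)) (z : ℝ) (i : Fin n) :
    (f i)⁻¹ * Smat z * f i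
      = Real.cosh (z / 2) • (1 : M2') + Real.sinh (z / 2) • ((f i)⁻¹ * Dmat * f i) := by
  have h1 : (f i)⁻¹ * f i = 1 :=
    Matrix.nonsing_inv_mul (f i) ((Matrix.isUnit_iff_isUnit_det (f i)).mp (hf i))
  rw [Smat_eq]
  rw [Matrix.mul_add, Matrix.add_mul, Matrix.mul_smul, Matrix.mul_smul, Matrix.smul_mul,
    Matrix.smul_mul, Matrix.mul_one, h1, Matrix.mul_assoc]

lemma trace_expand {n : ℕ} (f : Fin n → M2') (hf : ∀ i, IsUnit (f i))
    (γ : M2') (z : ℝ) :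
    Matrix.trace ((List.ofFn fun i : Fin n => (f i)⁻¹ * Smat z * f i).prod * γ)
      = ∑ I : Finset (Fin n),
          (Real.cosh (z / 2) ^ (n - I.card) * Real.sinh (z / 2) ^ I.card) *
            Matrix.trace (((I.sort (· ≤ ·)).map fun i => (f i)⁻¹ * Dmat * f i).prod * γ) := by
  have h1 : (List.ofFn fun i : Fin n => (f i)⁻¹ * Smat z * f i)
      = (List.finRange n).map fun i =>
          Real.cosh (z / 2) • (1 : M2') + Real.sinh (z / 2) • ((f i)⁻¹ * Dmat * f i) := by
    rw [List.ofFn_eq_map]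
    exact List.map_congr_left fun i _ => conj_Smat f hf z i
  rw [h1, prod_expand _ _ _ _ (List.pairwise_lt_finRange n)]
  rw [List.toFinset_finRange, Finset.powerset_univ, List.length_finRange]
  rw [Matrix.sum_mul, Matrix.trace_sum]
  exact Finset.sum_congr rfl fun I _ => by rw [Matrix.smul_mul, Matrix.trace_smul, smul_eq_mul]

lemma expand_scalar (n r : ℕ) (hr : r ≤ n) (z : ℝ) :
    Real.cosh (z / 2) ^ (n - r) * Real.sinh (z / 2) ^ r
      = ∑ S : Finset (Fin n),
          ((∏ i ∈ Sᶜ, eps r i) / 2 ^ n) * Real.exp (((2 * (S.card : ℝ) - n) / 2) * z) := by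
  have h1 : Real.cosh (z / 2) ^ (n - r) * Real.sinh (z / 2) ^ r
      = ∏ i : Fin n, (if (i : ℕ) < r then Real.sinh (z / 2) else Real.cosh (z / 2)) := by
    rw [Finset.prod_ite, Finset.prod_const, Finset.prod_const, card_filter_lt' hr]
    have h2 : ((univ : Finset (Fin n)).filter fun i : Fin n => ¬ (i : ℕ) < r).card = n - r := by
      have := Finset.card_filter_add_card_filter_not
        (s := (univ : Finset (Fin n))) (p := fun i : Fin n => (i : ℕ) < r)
      rw [card_filter_lt' hr, card_univ, Fintype.card_fin] at this
      omega
    rw [h2, mul_comm]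
  rw [h1]
  have h3 : ∀ i : Fin n, (if (i : ℕ) < r then Real.sinh (z / 2) else Real.cosh (z / 2))
      = Real.exp (z / 2) / 2 + eps r i * (Real.exp (-(z / 2)) / 2) := by
    intro i
    by_cases h : (i : ℕ) < r <;>
      simp [h, eps, Real.sinh_eq, Real.cosh_eq] <;> ring
  rw [Finset.prod_congr rfl fun i _ => h3 i]
  rw [Fintype.prod_add]
  apply Finset.sum_congr rfl
  intro S _
  have hScard : S.card ≤ n := by
    simpa using Finset.card_le_univ S
  have hccard : (Sᶜ : Finset (Fin n)).card = n - S.card := by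
    rw [Finset.card_compl, Fintype.card_fin]
  rw [Finset.prod_const, Finset.prod_mul_distrib, Finset.prod_const, hccard]
  have hkey : Real.exp (z / 2) ^ S.card * Real.exp (-(z / 2)) ^ (n - S.card)
      = Real.exp (((2 * (S.card : ℝ) - n) / 2) * z) := by
    rw [← Real.exp_nat_mul, ← Real.exp_nat_mul, ← Real.exp_add]
    congr 1
    have hb : ((n - S.card : ℕ) : ℝ) = (n : ℝ) - S.card := by
      rw [Nat.cast_sub hScard]
    rw [hb]; ring
  have h2n : (2 : ℝ) ^ S.card * 2 ^ (n - S.card) = 2 ^ n := by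
    rw [← pow_add, Nat.add_sub_cancel' hScard]
  rw [div_pow, div_pow, ← hkey, ← h2n]
  ring

lemma sum_sigma_eq {n : ℕ} (S : Finset (Fin n)) :
    ∑ i : Fin n, (if i ∈ S then (1 : ℝ) else -1) = 2 * (S.card : ℝ) - n := by
  have h : ∀ i : Fin n, (if i ∈ S then (1 : ℝ) else -1)
      = 2 * (if i ∈ S then (1 : ℝ) else 0) - 1 := by
    intro i; by_cases h : i ∈ S <;> simp [h] <;> norm_num
  rw [Finset.sum_congr rfl fun i _ => h i, Finset.sum_sub_distrib, ← Finset.mul_sum,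
    Finset.sum_boole, Finset.sum_const, card_univ, Fintype.card_fin]
  simp [Finset.filter_mem_eq_inter]

lemma core_identity {n k r : ℕ} (hr : r ≤ n) :
    ∑ S : Finset (Fin n), (∏ i ∈ Sᶜ, eps r i) * (2 * (S.card : ℝ) - n) ^ k
      = 2 ^ n * (Bnkr n k r : ℝ) := by
  have hstep : ∀ S : Finset (Fin n),
      (∏ i ∈ Sᶜ, eps r i) * (2 * (S.card : ℝ) - n) ^ k
        = ∑ q ∈ Finset.piAntidiag (univ : Finset (Fin n)) k,
            (Nat.multinomial univ q : ℝ) *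
              ((∏ i ∈ Sᶜ, eps r i) * ∏ i : Fin n, (if i ∈ S then (1 : ℝ) else -1) ^ q i) := by
    intro S
    rw [← sum_sigma_eq S, Finset.sum_pow_eq_sum_piAntidiag, Finset.mul_sum]
    exact Finset.sum_congr rfl fun q _ => by ring
  rw [Finset.sum_congr rfl fun S _ => hstep S, Finset.sum_comm]
  have inner : ∀ q : Fin n → ℕ,
      ∑ S : Finset (Fin n),
          (∏ i ∈ Sᶜ, eps r i) * ∏ i : Fin n, (if i ∈ S then (1 : ℝ) else -1) ^ q i
        = ∏ i : Fin n, (1 + eps r i * (-1 : ℝ) ^ q i) := by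
    intro q
    have hS : ∀ S : Finset (Fin n),
        (∏ i ∈ Sᶜ, eps r i) * ∏ i : Fin n, (if i ∈ S then (1 : ℝ) else -1) ^ q i
          = ∏ i ∈ Sᶜ, (eps r i * (-1 : ℝ) ^ q i) := by
      intro S
      have ha : ∏ i ∈ S, (if i ∈ S then (1 : ℝ) else -1) ^ q i = 1 :=
        Finset.prod_eq_one fun i hi => by simp [hi]
      have hb : ∏ i ∈ Sᶜ, (if i ∈ S then (1 : ℝ) else -1) ^ q i
          = ∏ i ∈ Sᶜ, (-1 : ℝ) ^ q i :=
        Finset.prod_congr rfl fun i hi => by simp [Finset.mem_compl.mp hi]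
      rw [← Finset.prod_mul_prod_compl S fun i => (if i ∈ S then (1 : ℝ) else -1) ^ q i,
        ha, hb, one_mul, ← Finset.prod_mul_distrib]
    rw [Finset.sum_congr rfl fun S _ => hS S, Fintype.prod_add]
    exact Finset.sum_congr rfl fun S _ => by simp
  rw [Finset.sum_congr rfl fun q _ => by rw [← Finset.mul_sum, inner q]]
  have factor : ∀ (q : Fin n → ℕ) (i : Fin n), (1 + eps r i * (-1 : ℝ) ^ q i)
      = if (((i : ℕ) < r → Odd (q i)) ∧ (r ≤ (i : ℕ) → Even (q i))) then 2 else 0 := by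
    intro q i
    by_cases hi : (i : ℕ) < r <;> rcases Nat.even_or_odd (q i) with hp | hp
    · rw [hp.neg_one_pow, if_neg, eps, if_pos hi]; · ring
      rintro ⟨h1, -⟩
      exact (Nat.not_odd_iff_even.mpr hp) (h1 hi)
    · rw [hp.neg_one_pow, if_pos, eps, if_pos hi]; · ring
      exact ⟨fun _ => hp, fun h => absurd hi (not_lt.mpr h)⟩
    · rw [hp.neg_one_pow, if_pos, eps, if_neg hi]; · ring
      exact ⟨fun h => absurd h hi, fun _ => hp⟩
    · rw [hp.neg_one_pow, if_neg, eps, if_neg hi]; · ring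
      rintro ⟨-, h2⟩
      exact (Nat.not_even_iff_odd.mpr hp) (h2 (not_lt.mp hi))
  have prodfactor : ∀ q : Fin n → ℕ,
      (∏ i : Fin n, (1 + eps r i * (-1 : ℝ) ^ q i))
        = if (∀ i : Fin n, ((i : ℕ) < r → Odd (q i)) ∧ (r ≤ (i : ℕ) → Even (q i)))
            then (2 : ℝ) ^ n else 0 := by
    intro q
    rw [Finset.prod_congr rfl fun i _ => factor q i]
    by_cases hall : ∀ i : Fin n, ((i : ℕ) < r → Odd (q i)) ∧ (r ≤ (i : ℕ) → Even (q i))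
    · rw [Finset.prod_congr rfl fun i _ => if_pos (hall i), Finset.prod_const, card_univ,
        Fintype.card_fin, if_pos hall]
    · obtain ⟨i, hi⟩ := not_forall.mp hall
      rw [if_neg hall]
      exact Finset.prod_eq_zero (mem_univ i) (if_neg hi)
  rw [Finset.sum_congr rfl fun q _ => by rw [prodfactor q]]
  rw [Finset.piAntidiag_univ_fin_eq_antidiagonalTuple k n]
  unfold Bnkr
  rw [Finset.sum_filter]
  push_cast
  rw [Finset.mul_sum]
  refine Finset.sum_congr rfl fun q _ => ?_
  by_cases h : ∀ i : Fin n, ((i : ℕ) < r → Odd (q i)) ∧ (r ≤ (i : ℕ) → Even (q i)) <;>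
    simp [h] <;> ring

lemma Bnkr_eq_zero {n k r : ℕ} (hr : r ≤ n) (h : ¬(r ≤ k ∧ r % 2 = k % 2)) :
    Bnkr n k r = 0 := by
  unfold Bnkr
  rw [Finset.filter_eq_empty_iff.mpr _, Finset.sum_empty]
  intro q hq hcond
  have hsum : ∑ i, q i = k := Finset.Nat.mem_antidiagonalTuple.mp hq
  set F := (univ : Finset (Fin n)).filter (fun i : Fin n => (i : ℕ) < r) with hFdef
  have hF : F.card = r := card_filter_lt' hr
  have h1 : r ≤ k := by
    have hle : ∑ i ∈ F, 1 ≤ ∑ i ∈ F, q i := by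
      apply Finset.sum_le_sum
      intro i hi
      have hodd : Odd (q i) := (hcond i).1 (mem_filter.mp hi).2
      exact hodd.pos
    have hle2 : ∑ i ∈ F, q i ≤ ∑ i, q i :=
      Finset.sum_le_sum_of_subset (Finset.filter_subset _ _)
    calc r = F.card := hF.symm
      _ = ∑ i ∈ F, 1 := by rw [Finset.sum_const, smul_eq_mul, mul_one]
      _ ≤ ∑ i ∈ F, q i := hle
      _ ≤ ∑ i, q i := hle2
      _ = k := hsum
  have h2 : r % 2 = k % 2 := by
    have hz : ((r : ℕ) : ZMod 2) = ((k : ℕ) : ZMod 2) := by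
      rw [← hsum]
      push_cast
      rw [← Finset.sum_filter_add_sum_filter_not univ (fun i : Fin n => (i : ℕ) < r)
        (fun i => ((q i : ZMod 2)))]
      have ha : ∑ i ∈ F, ((q i : ZMod 2)) = ∑ i ∈ F, 1 := by
        apply Finset.sum_congr rfl
        intro i hi
        have hodd : Odd (q i) := (hcond i).1 (mem_filter.mp hi).2
        rw [← ZMod.natCast_mod, Nat.odd_iff.mp hodd, Nat.cast_one]
      have hb : ∑ i ∈ univ.filter (fun i : Fin n => ¬ (i : ℕ) < r), ((q i : ZMod 2)) = 0 := by
        apply Finset.sum_eq_zero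
        intro i hi
        have heven : Even (q i) := (hcond i).2 (not_lt.mp (mem_filter.mp hi).2)
        rw [← ZMod.natCast_mod, Nat.even_iff.mp heven, Nat.cast_zero]
      rw [ha, hb, add_zero, Finset.sum_const, hF]; simp
    exact (ZMod.natCast_eq_natCast_iff' r k 2).mp hz
  exact h ⟨h1, h2⟩

/-- the `k`-th derivative of the trace function, grouped by the number `r` of
odd entries. -/
theorem iteratedDeriv_trace_eq_sum_Bnkr (n k : ℕ) (hn : 1 ≤ n)
    (f : Fin n → Matrix (Fin 2) (Fin 2) ℝ) (hf : ∀ i, IsUnit (f i))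
    (γ : Matrix (Fin 2) (Fin 2) ℝ) :
    iteratedDeriv k
      (fun z : ℝ =>
        Matrix.trace ((List.ofFn fun i : Fin n => (f i)⁻¹ * Smat z * f i).prod * γ)) 0 =
    (1 / 2 ^ k : ℝ) * ∑ r ∈ (Finset.range (k + 1)).filter (fun r => r % 2 = k % 2),
      (Bnkr n k r : ℝ) * ∑ I ∈ Finset.univ.filter (fun I : Finset (Fin n) => I.card = r),
        Matrix.trace (((I.sort (· ≤ ·)).map fun i => (f i)⁻¹ * Dmat * f i).prod * γ) := by
  classical
  set t : Finset (Fin n) → ℝ := fun I =>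
    Matrix.trace (((I.sort (· ≤ ·)).map fun i => (f i)⁻¹ * Dmat * f i).prod * γ) with ht
  have hT : (fun z : ℝ =>
      Matrix.trace ((List.ofFn fun i : Fin n => (f i)⁻¹ * Smat z * f i).prod * γ))
      = fun z => ∑ p : Finset (Fin n) × Finset (Fin n),
          (((∏ i ∈ p.2ᶜ, eps p.1.card i) / 2 ^ n) * t p.1) *
            Real.exp (((2 * (p.2.card : ℝ) - n) / 2) * z) := by
    funext z
    rw [trace_expand f hf γ z, Fintype.sum_prod_type]
    apply Finset.sum_congr rfl
    intro I _
    rw [expand_scalar n I.card (by simpa using Finset.card_le_univ I) z, Finset.sum_mul]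
    exact Finset.sum_congr rfl fun S _ => by ring
  rw [hT, iteratedDeriv_sum_exp univ
    (fun p : Finset (Fin n) × Finset (Fin n) => ((∏ i ∈ p.2ᶜ, eps p.1.card i) / 2 ^ n) * t p.1)
    (fun p : Finset (Fin n) × Finset (Fin n) => (2 * (p.2.card : ℝ) - n) / 2) k 0]
  simp only [mul_zero, Real.exp_zero, mul_one]
  rw [Fintype.sum_prod_type]
  have hsum : ∀ I : Finset (Fin n),
      ∑ S : Finset (Fin n),
          (((∏ i ∈ Sᶜ, eps I.card i) / 2 ^ n) * t I) * ((2 * (S.card : ℝ) - n) / 2) ^ k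
        = (Bnkr n k I.card : ℝ) / 2 ^ k * t I := by
    intro I
    have hr : I.card ≤ n := by simpa using Finset.card_le_univ I
    have hc := core_identity (n := n) (k := k) (r := I.card) hr
    have h2 : ∀ S : Finset (Fin n),
        (((∏ i ∈ Sᶜ, eps I.card i) / 2 ^ n) * t I) * ((2 * (S.card : ℝ) - n) / 2) ^ k
          = ((∏ i ∈ Sᶜ, eps I.card i) * (2 * (S.card : ℝ) - n) ^ k) * (t I / (2 ^ n * 2 ^ k)) := by
      intro S; rw [div_pow]; ring
    rw [Finset.sum_congr rfl fun S _ => h2 S, ← Finset.sum_mul, hc]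
    have h2n : (2 : ℝ) ^ n ≠ 0 := by positivity
    field_simp
  rw [Finset.sum_congr rfl fun I _ => hsum I]
  -- regroup by cardinality
  set G : ℕ → ℝ := fun r => (Bnkr n k r : ℝ) / 2 ^ k *
      ∑ I ∈ univ.filter (fun I : Finset (Fin n) => I.card = r), t I with hG
  have hfib := Finset.sum_fiberwise_of_maps_to
      (s := (univ : Finset (Finset (Fin n)))) (g := fun I : Finset (Fin n) => I.card) (t := Finset.range (n + 1))
      (fun I _ => Finset.mem_range.mpr (Nat.lt_succ_of_le (by simpa using Finset.card_le_univ I)))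
      (fun I => (Bnkr n k I.card : ℝ) / 2 ^ k * t I)
  rw [← hfib]
  have hinner : ∀ r ∈ Finset.range (n + 1),
      ∑ I ∈ univ.filter (fun I : Finset (Fin n) => I.card = r),
          (Bnkr n k I.card : ℝ) / 2 ^ k * t I = G r := by
    intro r _
    simp only [hG]
    rw [Finset.mul_sum]
    exact Finset.sum_congr rfl fun I hI => by rw [(Finset.mem_filter.mp hI).2]
  rw [Finset.sum_congr rfl hinner]
  -- empty-fiber and vanishing-Bnkr arguments
  have hTs : ∀ r : ℕ, n < r →
      ∑ I ∈ univ.filter (fun I : Finset (Fin n) => I.card = r), t I = 0 := by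
    intro r hr
    rw [Finset.filter_eq_empty_iff.mpr, Finset.sum_empty]
    intro I _
    have : I.card ≤ n := by simpa using Finset.card_le_univ I
    omega
  have hL : ∑ r ∈ Finset.range (n + 1), G r = ∑ r ∈ Finset.range (n + k + 2), G r := by
    apply Finset.sum_subset
    · intro r hr
      rw [Finset.mem_range] at hr ⊢; omega
    · intro r _ hr
      rw [Finset.mem_range, not_lt] at hr
      simp only [hG]
      rw [hTs r (by omega), mul_zero]
  have hR : ∑ r ∈ (Finset.range (k + 1)).filter (fun r => r % 2 = k % 2), G r
      = ∑ r ∈ Finset.range (n + k + 2), G r := by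
    apply Finset.sum_subset
    · intro r hr
      have := Finset.mem_range.mp (Finset.mem_filter.mp hr).1
      rw [Finset.mem_range]; omega
    · intro r _ hr
      simp only [hG]
      rcases le_or_gt r n with hrn | hrn
      · have hB : Bnkr n k r = 0 := by
          apply Bnkr_eq_zero hrn
          intro ⟨h1, h2⟩
          exact hr (Finset.mem_filter.mpr ⟨Finset.mem_range.mpr (by omega), h2⟩)
        rw [hB]; simp
      · rw [hTs r hrn, mul_zero]
  rw [hL, ← hR, Finset.mul_sum]
  exact Finset.sum_congr rfl fun r _ => by simp only [hG]; ring
end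

section
/- Let n ≥ 1, let l_1,…,l_n, θ_1,…,θ_n, L be real numbers, let f_1,…,f_n be invertible 2×2 real matrices satisfying f_i⁻¹ D f_i = A(l_i, θ_i) for each i, and define T : ℝ → ℝ by T(z) = Tr( (f_1⁻¹ S(z) f_1)⋯(f_n⁻¹ S(z) f_n)·γ_L ). Then the third derivative of T at 0 equals (1/8)·[ (6n − 4)·sinh(L/2)·Σ_{i=1}^n cos θ_i + 12·Σ_{1 ≤ i < j < k ≤ n} ( sinh(L/2) cos θ_i cos θ_j cos θ_k + sinh(L/2 − (l_j − l_i)) sin θ_i sin θ_j cos θ_k − sinh(L/2 − (l_k − l_i)) sin θ_i cos θ_j sin θ_k + sinh(L/2 − (l_k − l_j)) cos θ_i sin θ_j sin θ_k ) ]. -/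
open Finset

/-! ### Auxiliary scalar derivative machinery -/

/-- `Efn a b z = cosh(z/2)^a * sinh(z/2)^b`. -/
noncomputable def Efn (a b : ℕ) (z : ℝ) : ℝ := Real.cosh (z/2) ^ a * Real.sinh (z/2) ^ b

lemma hasDerivAt_Efn (a b : ℕ) (z : ℝ) :
    HasDerivAt (Efn a b)
      ((a : ℝ) / 2 * Efn (a-1) (b+1) z + (b : ℝ) / 2 * Efn (a+1) (b-1) z) z := by
  have hz : HasDerivAt (fun z : ℝ => z / 2) (1/2) z := (hasDerivAt_id z).div_const 2
  have hc : HasDerivAt (fun z : ℝ => Real.cosh (z/2)) (Real.sinh (z/2) * (1/2)) z :=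
    by have := (Real.hasDerivAt_cosh (z/2)).comp z hz; exact this
  have hs : HasDerivAt (fun z : ℝ => Real.sinh (z/2)) (Real.cosh (z/2) * (1/2)) z :=
    by have := (Real.hasDerivAt_sinh (z/2)).comp z hz; exact this
  have h := (hc.pow a).mul (hs.pow b)
  refine HasDerivAt.congr_deriv h ?_
  simp only [Efn, pow_succ, Pi.pow_apply]
  ring

/-- Symbolic differentiation of a linear combination of `Efn`s. -/
noncomputable def Dv (P : List (ℝ × ℕ × ℕ)) : List (ℝ × ℕ × ℕ) :=
  P.flatMap fun p =>
    [(p.1 * p.2.1 / 2, p.2.1 - 1, p.2.2 + 1), (p.1 * p.2.2 / 2, p.2.1 + 1, p.2.2 - 1)]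

/-- Evaluation of a linear combination of `Efn`s. -/
noncomputable def Ev (P : List (ℝ × ℕ × ℕ)) (z : ℝ) : ℝ :=
  (P.map fun p => p.1 * Efn p.2.1 p.2.2 z).sum

lemma hasDerivAt_Ev (P : List (ℝ × ℕ × ℕ)) (z : ℝ) :
    HasDerivAt (fun z => Ev P z) (Ev (Dv P) z) z := by
  induction P with
  | nil => simpa [Ev, Dv] using hasDerivAt_const z (0:ℝ)
  | cons p P ih =>
    have h := ((hasDerivAt_Efn p.2.1 p.2.2 z).const_mul p.1).add ih
    have he : (fun z => Ev (p :: P) z) = fun z => p.1 * Efn p.2.1 p.2.2 z + Ev P z := by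
      funext w; simp [Ev]
    rw [he]
    refine HasDerivAt.congr_deriv h ?_
    simp [Ev, Dv]
    ring

lemma deriv_Ev (P : List (ℝ × ℕ × ℕ)) : deriv (fun z => Ev P z) = fun z => Ev (Dv P) z :=
  funext fun z => (hasDerivAt_Ev P z).deriv

lemma iteratedDeriv_three_Ev (P : List (ℝ × ℕ × ℕ)) :
    iteratedDeriv 3 (fun z => Ev P z) 0 = Ev (Dv (Dv (Dv P))) 0 := by
  have : iteratedDeriv 3 (fun z => Ev P z) = fun z => Ev (Dv (Dv (Dv P))) z := by
    rw [show (3:ℕ) = 2 + 1 from rfl, iteratedDeriv_succ, show (2:ℕ) = 1 + 1 from rfl,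
      iteratedDeriv_succ, iteratedDeriv_one, deriv_Ev, deriv_Ev, deriv_Ev]
  rw [this]

/-- Third derivative at `0` of `t * Efn a b`. -/
noncomputable def c3 (t : ℝ) (a b : ℕ) : ℝ := Ev (Dv (Dv (Dv [(t, a, b)]))) 0

lemma Ev_append (P Q : List (ℝ × ℕ × ℕ)) (z : ℝ) : Ev (P ++ Q) z = Ev P z + Ev Q z := by
  simp [Ev]

lemma Dv_append (P Q : List (ℝ × ℕ × ℕ)) : Dv (P ++ Q) = Dv P ++ Dv Q := by
  simp [Dv]

lemma EvDv3_sum (P : List (ℝ × ℕ × ℕ)) :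
    Ev (Dv (Dv (Dv P))) 0 = (P.map fun p => c3 p.1 p.2.1 p.2.2).sum := by
  induction P with
  | nil => simp [Ev, Dv]
  | cons p P ih =>
    have : (p :: P) = [p] ++ P := rfl
    rw [this, Dv_append, Dv_append, Dv_append, Ev_append, ih]
    simp [c3]

lemma c3_one (t : ℝ) (a : ℕ) : c3 t a 1 = t * (3 * a + 1) / 8 := by
  simp [c3, Ev, Dv, Efn]
  ring

lemma c3_three (t : ℝ) (a : ℕ) : c3 t a 3 = 3 * t / 4 := by
  simp [c3, Ev, Dv, Efn]
  ring

lemma c3_zero (t : ℝ) (a : ℕ) : c3 t a 0 = 0 := by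
  simp [c3, Ev, Dv, Efn]

lemma c3_two (t : ℝ) (a : ℕ) : c3 t a 2 = 0 := by
  simp [c3, Ev, Dv, Efn]

lemma c3_big (t : ℝ) (a b : ℕ) : c3 t a (b+4) = 0 := by
  simp [c3, Ev, Dv, Efn, show b+4-1 = b+3 by omega, show b+3+1 = b+4 by omega,
    show b+4+1 = b+5 by omega, show b+5-1=b+4 by omega, show b+3-1 = b+2 by omega]

/-! ### Matrix coefficient machinery -/

local notation "Mat2" => Matrix (Fin 2) (Fin 2) ℝ

/-- Coefficient matrices of the expansion of `∏ (c•1 + s•Aᵢ)` in powers of `s`. -/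
noncomputable def Cf : List Mat2 → ℕ → Mat2
  | [], 0 => 1
  | [], _ + 1 => 0
  | _ :: M, 0 => Cf M 0
  | a :: M, k + 1 => Cf M (k + 1) + a * Cf M k

lemma Cf_zero (M : List Mat2) : Cf M 0 = 1 := by
  induction M with
  | nil => rfl
  | cons a M ih => simpa [Cf] using ih

lemma Cf_eq_zero : ∀ (M : List Mat2) (k : ℕ), M.length < k → Cf M k = 0
  | [], k+1, _ => rfl
  | a :: M, k+1, h => by
      have h' : M.length + 1 < k + 1 := by simpa using h
      have h1 : M.length < k + 1 := by omega
      have h2 : M.length < k := by omega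
      simp [Cf, Cf_eq_zero M (k+1) h1, Cf_eq_zero M k h2]

lemma prod_expand_s19 (M : List Mat2) (c s : ℝ) :
    (M.map fun A => c • (1 : Mat2) + s • A).prod =
      ∑ k ∈ Finset.range (M.length + 1), (c ^ (M.length - k) * s ^ k) • Cf M k := by
  induction M with
  | nil => simp [Cf]
  | cons a M ih =>
    rw [List.map_cons, List.prod_cons, ih]
    have hmul : ∀ S : Mat2, (c • (1:Mat2) + s • a) * S = c • S + s • (a * S) := by
      intro S; simp [add_mul, smul_mul_assoc]
    rw [hmul, Finset.smul_sum, Finset.mul_sum, Finset.smul_sum]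
    have h1 : ∑ k ∈ range (M.length + 1), c • ((c ^ (M.length - k) * s ^ k) • Cf M k)
        = ∑ k ∈ range (M.length + 1), (c ^ (M.length + 1 - k) * s ^ k) • Cf M k := by
      refine Finset.sum_congr rfl fun k hk => ?_
      rw [Finset.mem_range] at hk
      rw [smul_smul, show M.length + 1 - k = (M.length - k) + 1 by omega, pow_succ]
      ring_nf
    have h2 : ∑ k ∈ range (M.length + 1), s • (a * (c ^ (M.length - k) * s ^ k) • Cf M k)
        = ∑ k ∈ range (M.length + 1), (c ^ (M.length - k) * s ^ (k+1)) • (a * Cf M k) := by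
      refine Finset.sum_congr rfl fun k hk => ?_
      rw [mul_smul_comm, smul_smul, pow_succ]
      ring_nf
    rw [h1, h2]
    have hR : ∑ k ∈ range ((a :: M).length + 1),
          (c ^ ((a :: M).length - k) * s ^ k) • Cf (a :: M) k
        = (∑ k ∈ range (M.length + 1), (c ^ (M.length - k) * s ^ (k+1)) • Cf M (k+1))
          + (c ^ (M.length + 1) * s ^ 0) • Cf M 0
          + ∑ k ∈ range (M.length + 1), (c ^ (M.length - k) * s ^ (k+1)) • (a * Cf M k) := by
      rw [List.length_cons,
        Finset.sum_range_succ' (fun k => (c ^ (M.length + 1 - k) * s ^ k) • Cf (a :: M) k)]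
      simp only [Cf, Nat.succ_sub_succ_eq_sub, Nat.sub_zero, smul_add, Finset.sum_add_distrib]
      rw [Cf_zero]
      abel
    rw [hR]
    set F : ℕ → Mat2 := fun k => (c ^ (M.length + 1 - k) * s ^ k) • Cf M k with hF
    have e1 : ∑ k ∈ range (M.length + 2), F k = ∑ k ∈ range (M.length + 1), F (k+1) + F 0 :=
      Finset.sum_range_succ' F (M.length + 1)
    have e2 : ∑ k ∈ range (M.length + 2), F k
        = ∑ k ∈ range (M.length + 1), F k + F (M.length + 1) :=
      Finset.sum_range_succ F (M.length + 1)
    have hFtop : F (M.length + 1) = 0 := by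
      simp [hF, Cf_eq_zero M (M.length + 1) (by omega)]
    have h3 : ∑ k ∈ range (M.length + 1), (c ^ (M.length - k) * s ^ (k+1)) • Cf M (k+1)
          + (c ^ (M.length + 1) * s ^ 0) • Cf M 0
        = ∑ k ∈ range (M.length + 1), F k := by
      have : ∑ k ∈ range (M.length + 1), (c ^ (M.length - k) * s ^ (k+1)) • Cf M (k+1)
          = ∑ k ∈ range (M.length + 1), F (k+1) := by
        refine Finset.sum_congr rfl fun k hk => ?_
        simp [hF, Nat.succ_sub_succ]
      rw [this, show (c ^ (M.length + 1) * s ^ 0) • Cf M 0 = F 0 by simp [hF], ← e1, e2, hFtop,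
        add_zero]
    rw [← h3]

lemma Cf_ofFn_one (n : ℕ) (g : Fin n → Mat2) : Cf (List.ofFn g) 1 = ∑ i, g i := by
  induction n with
  | zero => simp [List.ofFn_zero]; rfl
  | succ n ih =>
    rw [List.ofFn_succ]
    show Cf (List.ofFn fun i => g i.succ) 1 + g 0 * Cf (List.ofFn fun i => g i.succ) 0 = _
    rw [ih, Cf_zero, Fin.sum_univ_succ, mul_one, add_comm]

lemma Cf_ofFn_two (n : ℕ) (g : Fin n → Mat2) :
    Cf (List.ofFn g) 2 = ∑ i, ∑ j ∈ Ioi i, g i * g j := by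
  induction n with
  | zero => simp [List.ofFn_zero]; rfl
  | succ n ih =>
    rw [List.ofFn_succ]
    show Cf (List.ofFn fun i => g i.succ) 2 + g 0 * Cf (List.ofFn fun i => g i.succ) 1 = _
    rw [ih, Cf_ofFn_one, Fin.sum_univ_succ, Fin.sum_Ioi_zero, Finset.mul_sum]
    simp only [Fin.sum_Ioi_succ]
    rw [add_comm]

lemma Cf_ofFn_three (n : ℕ) (g : Fin n → Mat2) :
    Cf (List.ofFn g) 3 = ∑ i, ∑ j ∈ Ioi i, ∑ k ∈ Ioi j, g i * g j * g k := by
  induction n with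
  | zero => simp [List.ofFn_zero]; rfl
  | succ n ih =>
    rw [List.ofFn_succ]
    show Cf (List.ofFn fun i => g i.succ) 3 + g 0 * Cf (List.ofFn fun i => g i.succ) 2 = _
    rw [ih, Cf_ofFn_two, Fin.sum_univ_succ, Fin.sum_Ioi_zero, Finset.mul_sum]
    simp only [Fin.sum_Ioi_succ, Finset.mul_sum, mul_assoc]
    rw [add_comm]

/-! ### Trace and conjugation lemmas -/

lemma trace_A_gamma (l θ L : ℝ) :
    Matrix.trace (Amat l θ * gammaMat L) = 2 * Real.sinh (L/2) * Real.cos θ := by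
  rw [Amat, gammaMat, Matrix.mul_fin_two, Matrix.trace_fin_two, Real.sinh_eq]
  simp
  ring

lemma trace_AAA_gamma (li lj lk θi θj θk L : ℝ) :
    Matrix.trace (Amat li θi * Amat lj θj * Amat lk θk * gammaMat L) =
      2 * (Real.sinh (L / 2) * Real.cos θi * Real.cos θj * Real.cos θk +
        Real.sinh (L / 2 - (lj - li)) * Real.sin θi * Real.sin θj * Real.cos θk -
        Real.sinh (L / 2 - (lk - li)) * Real.sin θi * Real.cos θj * Real.sin θk +
        Real.sinh (L / 2 - (lk - lj)) * Real.cos θi * Real.sin θj * Real.sin θk) := by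
  rw [Amat, Amat, Amat, gammaMat, Matrix.mul_fin_two, Matrix.mul_fin_two, Matrix.mul_fin_two,
    Matrix.trace_fin_two]
  simp only [Real.sinh_eq, Real.exp_sub, Real.exp_add, Real.exp_neg,
    Matrix.cons_val', Matrix.cons_val_zero, Matrix.cons_val_one, Matrix.head_cons,
    Matrix.empty_val', Matrix.cons_val_fin_one, Matrix.head_fin_const, Matrix.of_apply]
  have h1 := Real.exp_ne_zero (L/2)
  have h2 := Real.exp_ne_zero li
  have h3 := Real.exp_ne_zero lj
  have h4 := Real.exp_ne_zero lk
  field_simp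
  ring

lemma smat_decomp (z : ℝ) :
    Smat z = Real.cosh (z/2) • (1 : Mat2) + Real.sinh (z/2) • Dmat := by
  ext i j
  fin_cases i <;> fin_cases j <;>
    simp [Smat, Dmat, Matrix.one_apply] <;>
    first
    | linear_combination (Real.cosh_add_sinh (z/2)).symm
    | linear_combination (Real.cosh_sub_sinh (z/2)).symm

lemma conj_smat (F : Mat2) (hF : IsUnit F) (A : Mat2) (hFA : F⁻¹ * Dmat * F = A) (z : ℝ) :
    F⁻¹ * Smat z * F = Real.cosh (z/2) • (1 : Mat2) + Real.sinh (z/2) • A := by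
  have h1 : F⁻¹ * F = 1 := Matrix.nonsing_inv_mul F ((Matrix.isUnit_iff_isUnit_det F).mp hF)
  rw [smat_decomp]
  rw [mul_add, add_mul, Matrix.mul_smul, Matrix.smul_mul, Matrix.mul_smul, Matrix.smul_mul,
    mul_one, h1, hFA]

lemma list_range_map_sum {α : Type*} [AddCommMonoid α] (m : ℕ) (g : ℕ → α) :
    ((List.range m).map g).sum = ∑ k ∈ Finset.range m, g k := by
  induction m with
  | zero => simp
  | succ m ih =>
    rw [List.range_succ, List.map_append, List.sum_append, Finset.sum_range_succ, ih]
    simp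

/-- third derivative of `T` at `0`. -/
theorem iteratedDeriv_three_trace_eq (n : ℕ) (hn : 1 ≤ n) (l θ : Fin n → ℝ) (L : ℝ)
    (f : Fin n → Matrix (Fin 2) (Fin 2) ℝ) (hf : ∀ i, IsUnit (f i))
    (hA : ∀ i, (f i)⁻¹ * Dmat * f i = Amat (l i) (θ i)) :
    iteratedDeriv 3
      (fun z : ℝ =>
        Matrix.trace
          ((List.ofFn fun i : Fin n => (f i)⁻¹ * Smat z * f i).prod * gammaMat L)) 0 =
    (1 / 8 : ℝ) *
      ((6 * (n : ℝ) - 4) * Real.sinh (L / 2) * ∑ i, Real.cos (θ i) +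
        12 * ∑ i : Fin n, ∑ j ∈ Finset.Ioi i, ∑ k ∈ Finset.Ioi j,
          (Real.sinh (L / 2) * Real.cos (θ i) * Real.cos (θ j) * Real.cos (θ k) +
            Real.sinh (L / 2 - (l j - l i)) * Real.sin (θ i) * Real.sin (θ j) *
              Real.cos (θ k) -
            Real.sinh (L / 2 - (l k - l i)) * Real.sin (θ i) * Real.cos (θ j) *
              Real.sin (θ k) +
            Real.sinh (L / 2 - (l k - l j)) * Real.cos (θ i) * Real.sin (θ j) *
              Real.sin (θ k))) := by
  classical
  set A : Fin n → Mat2 := fun i => Amat (l i) (θ i) with hA'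
  set LA : List Mat2 := List.ofFn A with hLA
  have hlen : LA.length = n := by simp [hLA]
  set t : ℕ → ℝ := fun k => Matrix.trace (Cf LA k * gammaMat L) with ht
  have key : ∀ z : ℝ,
      Matrix.trace ((List.ofFn fun i : Fin n => (f i)⁻¹ * Smat z * f i).prod * gammaMat L)
      = Ev ((List.range (n+1)).map fun k => (t k, n - k, k)) z := by
    intro z
    have hfn : (List.ofFn fun i : Fin n => (f i)⁻¹ * Smat z * f i)
        = LA.map fun B => Real.cosh (z/2) • (1:Mat2) + Real.sinh (z/2) • B := by
      rw [hLA, List.map_ofFn]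
      exact congrArg List.ofFn (funext fun i => conj_smat (f i) (hf i) (A i) (hA i) z)
    rw [hfn, prod_expand_s19, hlen, Finset.sum_mul, Matrix.trace_sum, Ev, List.map_map,
      list_range_map_sum]
    refine Finset.sum_congr rfl fun k hk => ?_
    rw [smul_mul_assoc, Matrix.trace_smul, smul_eq_mul]
    simp only [Function.comp, ht, Efn]
    ring
  have hfun : (fun z : ℝ =>
      Matrix.trace ((List.ofFn fun i : Fin n => (f i)⁻¹ * Smat z * f i).prod * gammaMat L))
      = fun z => Ev ((List.range (n+1)).map fun k => (t k, n - k, k)) z := funext key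
  rw [hfun, iteratedDeriv_three_Ev, EvDv3_sum, List.map_map, list_range_map_sum]
  have hsplit : ∀ k ∈ Finset.range (n+1),
      ((fun p : ℝ × ℕ × ℕ => c3 p.1 p.2.1 p.2.2) ∘ fun k => (t k, n - k, k)) k
      = (if k = 1 then t 1 * (3 * ((n:ℝ) - 1) + 1) / 8 else 0)
        + (if k = 3 then 3 * t 3 / 4 else 0) := by
    intro k hk
    simp only [Function.comp]
    rcases Nat.lt_or_ge k 4 with h4 | h4
    · interval_cases k
      · simp [c3_zero]
      · rw [c3_one, Nat.cast_sub hn]; norm_num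
      · simp [c3_two]
      · simp [c3_three]
    · obtain ⟨m, rfl⟩ : ∃ m, k = m + 4 := ⟨k - 4, by omega⟩
      simp [c3_big]
  rw [Finset.sum_congr rfl hsplit, Finset.sum_add_distrib,
    Finset.sum_ite_eq' (Finset.range (n+1)) 1, Finset.sum_ite_eq' (Finset.range (n+1)) 3]
  have h1mem : (1 : ℕ) ∈ Finset.range (n+1) := by
    rw [Finset.mem_range]; omega
  rw [if_pos h1mem]
  have h3if : (if (3:ℕ) ∈ Finset.range (n+1) then 3 * t 3 / 4 else 0) = 3 * t 3 / 4 := by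
    by_cases h : 3 ≤ n
    · rw [if_pos (by rw [Finset.mem_range]; omega)]
    · have hz : Cf LA 3 = 0 := Cf_eq_zero LA 3 (by rw [hlen]; omega)
      have : t 3 = 0 := by simp [ht, hz]
      rw [this]
      simp
  rw [h3if]
  have ht1 : t 1 = 2 * Real.sinh (L/2) * ∑ i, Real.cos (θ i) := by
    rw [ht]
    simp only [hLA, Cf_ofFn_one n A, Finset.sum_mul, Matrix.trace_sum]
    rw [Finset.mul_sum]
    refine Finset.sum_congr rfl fun i _ => ?_
    rw [hA', trace_A_gamma]
  have ht3 : t 3 = 2 * ∑ i : Fin n, ∑ j ∈ Finset.Ioi i, ∑ k ∈ Finset.Ioi j,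
      (Real.sinh (L / 2) * Real.cos (θ i) * Real.cos (θ j) * Real.cos (θ k) +
        Real.sinh (L / 2 - (l j - l i)) * Real.sin (θ i) * Real.sin (θ j) * Real.cos (θ k) -
        Real.sinh (L / 2 - (l k - l i)) * Real.sin (θ i) * Real.cos (θ j) * Real.sin (θ k) +
        Real.sinh (L / 2 - (l k - l j)) * Real.cos (θ i) * Real.sin (θ j) * Real.sin (θ k)) := by
    rw [ht]
    simp only [hLA, Cf_ofFn_three n A, Finset.sum_mul, Matrix.trace_sum]
    rw [Finset.mul_sum]
    refine Finset.sum_congr rfl fun i _ => ?_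
    rw [Finset.mul_sum]
    refine Finset.sum_congr rfl fun j _ => ?_
    rw [Finset.mul_sum]
    refine Finset.sum_congr rfl fun k _ => ?_
    rw [hA', trace_AAA_gamma]
  rw [ht1, ht3]
  ring
end
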